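/- The scaled sign operator C(v) := (‖v‖₁/d)·sign(v) on ℝᵈ satisfies ‖C(v) - v‖² = ‖v‖² - ‖v‖₁²/d, i.e., C is a φ(v)-approximate compressor with φ(v) = ‖v‖₁²/(d‖v‖²) for every nonzero v ∈ ℝᵈ. -/

import Mathlib

/-- The scaled sign operator `C v = (‖v‖₁/d) • sign v` on `ℝᵈ` satisfies, for
every `v` with all coordinates nonzero,
`‖C v - v‖² = ‖v‖² - ‖v‖₁²/d`; i.e. `C` is a `φ(v)`-approximate compressor with
`φ(v) = ‖v‖₁²/(d‖v‖²)`. -/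
theorem scaled_sign_is_compressor
    {d : ℕ} (hd : 0 < d) (v : EuclideanSpace ℝ (Fin d))
    (hv : ∀ i, v i ≠ 0)
    (C : EuclideanSpace ℝ (Fin d))
    (hC : ∀ i, C i = ((∑ j, |v j|) / d) * Real.sign (v i)) :
    ‖C - v‖ ^ 2 = ‖v‖ ^ 2 - (∑ j, |v j|) ^ 2 / d ∧
    ‖C - v‖ ^ 2 ≤ (1 - (∑ j, |v j|) ^ 2 / (d * ‖v‖ ^ 2)) * ‖v‖ ^ 2 := by
  set S : ℝ := ∑ j, |v j| with hS
  have hd' : (d : ℝ) ≠ 0 := Nat.cast_ne_zero.mpr hd.ne'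
  have hnsq : ∀ (w : EuclideanSpace ℝ (Fin d)), ‖w‖ ^ 2 = ∑ i, w i ^ 2 := by
    intro w
    rw [EuclideanSpace.norm_eq, Real.sq_sqrt (by positivity)]
    simp [sq_abs]
  have key : ‖C - v‖ ^ 2 = ‖v‖ ^ 2 - S ^ 2 / d := by
    rw [hnsq, hnsq]
    have hterm : ∀ i, (C - v) i ^ 2 = (S / d) ^ 2 - 2 * (S / d) * |v i| + v i ^ 2 := by
      intro i
      have h1 : (C - v) i = S / d * Real.sign (v i) - v i := by
        simp [hC i]
      rw [h1]
      rcases lt_or_gt_of_ne (hv i) with h | h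
      · rw [Real.sign_of_neg h, abs_of_neg h]; ring
      · rw [Real.sign_of_pos h, abs_of_pos h]; ring
    rw [Finset.sum_congr rfl fun i _ => hterm i]
    rw [Finset.sum_add_distrib, Finset.sum_sub_distrib, Finset.sum_const,
      ← Finset.mul_sum, ← hS]
    simp only [Finset.card_univ, Fintype.card_fin, nsmul_eq_mul]
    field_simp
    ring
  refine ⟨key, ?_⟩
  have hv0 : ‖v‖ ^ 2 ≠ 0 := by
    have : v ≠ 0 := by
      intro h
      exact hv ⟨0, hd⟩ (by simp [h])
    exact pow_ne_zero 2 (norm_ne_zero_iff.mpr this)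
  rw [key]
  have : (1 - S ^ 2 / (d * ‖v‖ ^ 2)) * ‖v‖ ^ 2 = ‖v‖ ^ 2 - S ^ 2 / d := by
    have hv1 : ‖v‖ ≠ 0 := by simpa using hv0
    field_simp
  rw [this]
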